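/- Let R be a nonempty finite set, let f : R → ℝ, and let λ > 0. Define the probability distribution p on R by p(r) = exp(λ·f(r)) / ∑_{r'∈R} exp(λ·f(r')). Then for every t > 0, ∑_{r∈R : f(r) < max_{r'∈R} f(r') − (ln|R| + t)/λ} p(r) ≤ e^{−t}. In other words, with probability at least 1 − e^{−t}, an element sampled from p has score within (ln|R| + t)/λ of the maximum score. -/

import Mathlib

/-- **Utility of the exponential mechanism.** Let `R` be a nonempty finite set,
`f : R → ℝ` a score function, and `λ > 0`.  Sample `r ∈ R` with probability
`p(r) = exp(λ·f(r)) / ∑_{r'∈R} exp(λ·f(r'))`.  Then for every `t > 0`, the total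
probability of the elements whose score is below `max f − (ln|R| + t)/λ` is at most
`e^{−t}`; i.e. with probability at least `1 − e^{−t}` the sampled element has score
within `(ln|R| + t)/λ` of the maximum. -/
theorem exponential_mechanism_utility {Ω : Type*}
    (R : Finset Ω) (hR : R.Nonempty) (f : Ω → ℝ)
    (lam : ℝ) (hlam : 0 < lam) (t : ℝ) (ht : 0 < t) :
    ∑ r ∈ R.filter
        (fun r => f r < R.sup' hR f - (Real.log R.card + t) / lam),
        Real.exp (lam * f r) / ∑ r' ∈ R, Real.exp (lam * f r')
      ≤ Real.exp (-t) := by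
  set M := R.sup' hR f with hM
  set S := ∑ r' ∈ R, Real.exp (lam * f r') with hSdef
  have hS : 0 < S := Finset.sum_pos (fun _ _ => Real.exp_pos _) hR
  have hcard : (0 : ℝ) < R.card := by
    exact_mod_cast Finset.card_pos.mpr hR
  have hMS : Real.exp (lam * M) ≤ S := by
    obtain ⟨r₀, hr₀, hr₀M⟩ := Finset.exists_mem_eq_sup' hR f
    have := Finset.single_le_sum (f := fun r => Real.exp (lam * f r))
      (fun i _ => (Real.exp_pos _).le) hr₀
    simpa [hM, hr₀M] using this
  rw [← Finset.sum_div, div_le_iff₀ hS]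
  calc ∑ r ∈ R.filter (fun r => f r < M - (Real.log R.card + t) / lam),
        Real.exp (lam * f r)
      ≤ ∑ _r ∈ R.filter (fun r => f r < M - (Real.log R.card + t) / lam),
        Real.exp (lam * M - (Real.log R.card + t)) := by
        apply Finset.sum_le_sum
        intro r hr
        have hlt := (Finset.mem_filter.mp hr).2
        apply Real.exp_le_exp.mpr
        have : lam * f r ≤ lam * (M - (Real.log R.card + t) / lam) :=
          mul_le_mul_of_nonneg_left hlt.le hlam.le
        calc lam * f r ≤ lam * (M - (Real.log R.card + t) / lam) := this
          _ = lam * M - (Real.log R.card + t) := by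
            field_simp
    _ = (R.filter (fun r => f r < M - (Real.log R.card + t) / lam)).card *
        Real.exp (lam * M - (Real.log R.card + t)) := by
        rw [Finset.sum_const, nsmul_eq_mul]
    _ ≤ R.card * Real.exp (lam * M - (Real.log R.card + t)) := by
        apply mul_le_mul_of_nonneg_right _ (Real.exp_pos _).le
        exact_mod_cast Finset.card_filter_le _ _
    _ = Real.exp (-t) * Real.exp (lam * M) := by
        rw [show lam * M - (Real.log R.card + t) = (lam * M + -t) + -Real.log R.card by ring,
          Real.exp_add, Real.exp_neg, Real.exp_log hcard, Real.exp_add]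
        field_simp
    _ ≤ Real.exp (-t) * S := by
        exact mul_le_mul_of_nonneg_left hMS (Real.exp_pos _).le
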